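/- Fix integers m ≥ 1 and k ≥ 1. Then m·n·H_{mn} − n·∑_{i=1}^{m} H_{mn−k·i} tends to k·(m+1)/2 as n → ∞ (along the filter atTop on ℕ, restricted to n ≥ k). -/

import Mathlib

open Filter

/-- The `j`-th harmonic number `H_j = ∑_{i=1}^j 1/i`, as a real number. -/
noncomputable def H (j : ℕ) : ℝ := ∑ i ∈ Finset.range j, (1 : ℝ) / (i + 1)

lemma aux_tendsto (m k i : ℕ) (hm : 1 ≤ m) (hk : 1 ≤ k) (_hi1 : 1 ≤ i) (him : i ≤ m) :
    Tendsto (fun n : ℕ => (n : ℝ) * (H (m * n) - H (m * n - k * i))) atTop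
      (nhds ((k * i : ℝ) / m)) := by
  have hm0 : (0:ℝ) < m := by exact_mod_cast hm
  -- upper bound function limit
  have hupper : Tendsto (fun n : ℕ => (k * i : ℝ) * n / ((m : ℝ) * n - k * i + 1)) atTop
      (nhds ((k * i : ℝ) / m)) := by
    have h0 : Tendsto (fun n : ℕ => ((1 : ℝ) - k * i) / n) atTop (nhds 0) :=
      tendsto_const_div_atTop_nhds_zero_nat _
    have h1 : Tendsto (fun n : ℕ => (m : ℝ) + (1 - k * i) / n) atTop (nhds m) := by
      have := tendsto_const_nhds (x := (m:ℝ)) (f := atTop (α := ℕ)) |>.add h0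
      simpa using this
    have h2 : Tendsto (fun n : ℕ => (k * i : ℝ) / ((m : ℝ) + (1 - k * i) / n)) atTop
        (nhds ((k * i : ℝ) / m)) := tendsto_const_nhds.div h1 (ne_of_gt hm0)
    apply h2.congr'
    filter_upwards [eventually_ge_atTop k] with n hn
    have hki : k * i ≤ m * n := le_trans (Nat.mul_le_mul hn him) (le_of_eq (mul_comm n m))
    have hn0 : (0:ℝ) < n := by
      have : 1 ≤ n := le_trans hk hn
      exact_mod_cast this
    have hd : (0:ℝ) < (m : ℝ) * n - k * i + 1 := by
      have : (k * i : ℝ) ≤ (m : ℝ) * n := by exact_mod_cast hki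
      linarith
    have heq : (m:ℝ) + (1 - k * i) / n = ((m : ℝ) * n - k * i + 1) / n := by
      field_simp
      ring
    rw [heq, div_div_eq_mul_div]
  apply tendsto_of_tendsto_of_tendsto_of_le_of_le' (tendsto_const_nhds (x := ((k*i:ℝ)/m))) hupper
  · -- lower bound
    filter_upwards [eventually_ge_atTop k] with n hn
    have hki : k * i ≤ m * n := le_trans (Nat.mul_le_mul hn him) (le_of_eq (mul_comm n m))
    have hn1 : 1 ≤ n := le_trans hk hn
    have hn0 : (0:ℝ) < n := by exact_mod_cast hn1
    have hmn0 : 0 < m * n := Nat.mul_pos hm hn1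
    have hHd : H (m * n) - H (m * n - k * i)
        = ∑ j ∈ Finset.Ico (m * n - k * i) (m * n), (1:ℝ)/(j+1) := by
      rw [Finset.sum_Ico_eq_sub _ (Nat.sub_le _ _)]
      rfl
    have hcard : (Finset.Ico (m * n - k * i) (m * n)).card = k * i := by
      rw [Nat.card_Ico, Nat.sub_sub_self hki]
    have hlb : (k * i : ℝ) * ((1:ℝ)/(m*n)) ≤ ∑ j ∈ Finset.Ico (m * n - k * i) (m * n), (1:ℝ)/(j+1) := by
      have := Finset.card_nsmul_le_sum (Finset.Ico (m * n - k * i) (m * n))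
        (fun j => (1:ℝ)/(j+1)) ((1:ℝ)/(m*n)) ?_
      · rw [hcard] at this
        simpa [nsmul_eq_mul] using this
      · intro j hj
        rw [Finset.mem_Ico] at hj
        apply one_div_le_one_div_of_le
        · positivity
        · have : j + 1 ≤ m * n := hj.2
          exact_mod_cast this
    rw [hHd]
    calc (k*i:ℝ)/m = (n:ℝ) * ((k * i : ℝ) * ((1:ℝ)/(m*n))) := by
          field_simp
      _ ≤ _ := by
          apply mul_le_mul_of_nonneg_left hlb hn0.le
  · -- upper bound
    filter_upwards [eventually_ge_atTop k] with n hn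
    have hki : k * i ≤ m * n := le_trans (Nat.mul_le_mul hn him) (le_of_eq (mul_comm n m))
    have hn1 : 1 ≤ n := le_trans hk hn
    have hn0 : (0:ℝ) < n := by exact_mod_cast hn1
    have hHd : H (m * n) - H (m * n - k * i)
        = ∑ j ∈ Finset.Ico (m * n - k * i) (m * n), (1:ℝ)/(j+1) := by
      rw [Finset.sum_Ico_eq_sub _ (Nat.sub_le _ _)]
      rfl
    have hcard : (Finset.Ico (m * n - k * i) (m * n)).card = k * i := by
      rw [Nat.card_Ico, Nat.sub_sub_self hki]
    have hcast : ((m * n - k * i : ℕ) : ℝ) = (m:ℝ) * n - k * i := by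
      push_cast [Nat.cast_sub hki]
      ring
    have hd : (0:ℝ) < (m : ℝ) * n - k * i + 1 := by
      have : (k * i : ℝ) ≤ (m : ℝ) * n := by exact_mod_cast hki
      linarith
    have hub : ∑ j ∈ Finset.Ico (m * n - k * i) (m * n), (1:ℝ)/(j+1)
        ≤ (k * i : ℝ) * ((1:ℝ)/((m:ℝ)*n - k*i + 1)) := by
      have := Finset.sum_le_card_nsmul (Finset.Ico (m * n - k * i) (m * n))
        (fun j => (1:ℝ)/(j+1)) ((1:ℝ)/((m:ℝ)*n - k*i + 1)) ?_
      · rw [hcard] at this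
        simpa [nsmul_eq_mul] using this
      · intro j hj
        rw [Finset.mem_Ico] at hj
        apply one_div_le_one_div_of_le hd
        have : (m * n - k * i : ℕ) ≤ j := hj.1
        have := (Nat.cast_le (α := ℝ)).2 this
        rw [hcast] at this
        linarith
    rw [hHd]
    calc (n:ℝ) * ∑ j ∈ Finset.Ico (m * n - k * i) (m * n), (1:ℝ)/(j+1)
        ≤ (n:ℝ) * ((k * i : ℝ) * ((1:ℝ)/((m:ℝ)*n - k*i + 1))) :=
          mul_le_mul_of_nonneg_left hub hn0.le
      _ = (k * i : ℝ) * n / ((m : ℝ) * n - k * i + 1) := by ring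

theorem stmt_9 (m k : ℕ) (hm : 1 ≤ m) (hk : 1 ≤ k) :
    Tendsto
      (fun n : ℕ => (m : ℝ) * n * H (m * n) - n * ∑ i ∈ Finset.Icc 1 m, H (m * n - k * i))
      atTop (nhds ((k : ℝ) * (m + 1) / 2)) := by
  have hsum : ∑ i ∈ Finset.Icc 1 m, ((k * i : ℝ) / m) = (k : ℝ) * (m + 1) / 2 := by
    have hm0 : (m:ℝ) ≠ 0 := by positivity
    have hgauss : ((∑ i ∈ Finset.Icc 1 m, i : ℕ) : ℝ) * 2 = m * (m + 1) := by
      have h1 : ∑ i ∈ Finset.Icc 1 m, i = ∑ i ∈ Finset.range (m+1), i := by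
        rw [Finset.range_eq_Ico, ← Finset.Ico_add_one_right_eq_Icc]
        rw [Finset.sum_eq_sum_Ico_succ_bot (Nat.succ_pos m)]
        simp
      rw [h1]
      have := Finset.sum_range_id_mul_two (m+1)
      have h2 : ((∑ i ∈ Finset.range (m+1), i) * 2 : ℕ) = ((m+1) * m : ℕ) := by
        simpa using this
      exact_mod_cast by rw [h2]; ring_nf
    have hS : (∑ i ∈ Finset.Icc 1 m, (i:ℝ)) * 2 = m*(m+1) := by
      push_cast at hgauss
      convert hgauss using 2
    rw [← Finset.sum_div, ← Finset.mul_sum]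
    field_simp
    nlinarith [hS]
  have key : Tendsto (fun n : ℕ => ∑ i ∈ Finset.Icc 1 m, (n : ℝ) * (H (m * n) - H (m * n - k * i)))
      atTop (nhds ((k : ℝ) * (m + 1) / 2)) := by
    rw [← hsum]
    apply tendsto_finset_sum
    intro i hi
    rw [Finset.mem_Icc] at hi
    exact aux_tendsto m k i hm hk hi.1 hi.2
  apply key.congr
  intro n
  simp only [mul_sub, Finset.sum_sub_distrib, Finset.sum_const, Nat.card_Icc,
    Finset.mul_sum, Nat.add_sub_cancel, nsmul_eq_mul]
  push_cast
  ring
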